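/- arXiv:math/9804067 — 4 statements merged into one kernel-verified Lean document; each statement's English description precedes it below -/
import Mathlib

section
/- Let X be the completion of c00 under a 1-unconditional norm ‖·‖, and suppose there is a constant C > 0 such that for every S_1-allowable family of vectors x_1, …, x_n in c00 (pairwise disjoint supports with (min supp x_i)_i ∈ S_1), one has C·Σ_i ‖x_i‖ ≤ ‖Σ_i x_i‖. Then in the 2-convexification X^{(2)}, for every S_1-allowable family y_1, …, y_n, one has C^{1/2}·(Σ_i ‖y_i‖_{(2)}²)^{1/2} ≤ ‖Σ_i y_i‖_{(2)} ≤ (Σ_i ‖y_i‖_{(2)}²)^{1/2}. -/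
/-- The Schreier classes `S_n` of finite subsets of `ℕ`:
`S_0` consists of singletons and the empty set, and `F ∈ S_{n+1}` iff
`F = F_1 ∪ ⋯ ∪ F_k` where `k ≤ F_1 < F_2 < ⋯ < F_k` and each `F_i ∈ S_n`
(the empty set is allowed in every class). -/
inductive Schreier : ℕ → Finset ℕ → Prop
  | empty (n : ℕ) : Schreier n ∅
  | singleton (m : ℕ) : Schreier 0 {m}
  | union (n : ℕ) (L : List (Finset ℕ))
      (hmem : ∀ F ∈ L, Schreier n F)
      (hchain : L.Chain' (fun E F => ∀ a ∈ E, ∀ b ∈ F, a < b))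
      (hlen : ∀ F ∈ L, ∀ a ∈ F, L.length ≤ a) :
      Schreier (n + 1) (L.foldr (· ∪ ·) ∅)

/-- A family of finitely supported vectors is `S_k`-allowable: the supports are
nonempty and pairwise disjoint, and the set of minima of the supports is in `S_k`. -/
def Allowable (k : ℕ) {r : ℕ} (x : Fin r → (ℕ →₀ ℝ)) : Prop :=
  (∀ i, (x i).support.Nonempty) ∧
  (∀ i j, i ≠ j → Disjoint (x i).support (x j).support) ∧
  Schreier k (Finset.image (fun i => ((x i).support.min.getD 0)) Finset.univ)

/-- A family of finite sets is `S_k`-allowable: nonempty, pairwise disjoint,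
with the set of minima in `S_k`. -/
def AllowableSets (k : ℕ) {r : ℕ} (E : Fin r → Finset ℕ) : Prop :=
  (∀ i, (E i).Nonempty) ∧
  (∀ i j, i ≠ j → Disjoint (E i) (E j)) ∧
  Schreier k (Finset.image (fun i => ((E i).min.getD 0)) Finset.univ)

/-- `N` is the sequence of norms `‖·‖_{V,m}` on `c₀₀`:
`N 0 x = ‖x‖_∞` and `N (m+1) x` is the supremum of `‖x‖_∞` together with all
`θ_k · Σ_i ‖E_i x‖_{V,m}` over `k ≥ 1` and `S_k`-allowable families `(E_i)`. -/
def VNormRec (θ : ℕ → ℝ) (N : ℕ → (ℕ →₀ ℝ) → ℝ) : Prop :=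
  (∀ x : ℕ →₀ ℝ, N 0 x = ⨆ j, |x j|) ∧
  (∀ (m : ℕ) (x : ℕ →₀ ℝ),
    IsLUB ({⨆ j, |x j|} ∪
      {y : ℝ | ∃ k, 1 ≤ k ∧ ∃ r, ∃ E : Fin r → Finset ℕ, AllowableSets k E ∧
        y = θ k * ∑ i, N m (x.filter (· ∈ E i))})
      (N (m + 1) x))

/-- Coordinatewise square. -/
noncomputable def fsq (x : ℕ →₀ ℝ) : ℕ →₀ ℝ :=
  Finsupp.mapRange (fun t => t ^ 2) (by norm_num) x

theorem two_convexification_of_asymptotic_l1_is_asymptotic_l2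
    (N : (ℕ →₀ ℝ) → ℝ)
    (htri : ∀ x y, N (x + y) ≤ N x + N y)
    (hhom : ∀ (c : ℝ) (x), N (c • x) = |c| * N x)
    (hnonneg : ∀ x, 0 ≤ N x)
    (huncond : ∀ x y : ℕ →₀ ℝ, (∀ j, |x j| ≤ |y j|) → N x ≤ N y)
    (C : ℝ) (hC : 0 < C)
    (hasym : ∀ (n : ℕ) (x : Fin n → (ℕ →₀ ℝ)), Allowable 1 x →
      C * ∑ i, N (x i) ≤ N (∑ i, x i)) :
    ∀ (n : ℕ) (y : Fin n → (ℕ →₀ ℝ)), Allowable 1 y →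
      Real.sqrt C * Real.sqrt (∑ i, Real.sqrt (N (fsq (y i))) ^ 2) ≤
        Real.sqrt (N (fsq (∑ i, y i))) ∧
      Real.sqrt (N (fsq (∑ i, y i))) ≤
        Real.sqrt (∑ i, Real.sqrt (N (fsq (y i))) ^ 2) := by

  intro n y hy
  obtain ⟨h1, h2, h3⟩ := hy
  have fsq_apply : ∀ (x : ℕ →₀ ℝ) (j : ℕ), fsq x j = (x j) ^ 2 := by
    intro x j; simp [fsq, Finsupp.mapRange_apply]
  have support_fsq : ∀ x : ℕ →₀ ℝ, (fsq x).support = x.support := by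
    intro x; ext j
    simp [Finsupp.mem_support_iff, fsq_apply, pow_eq_zero_iff]
  have hsum : fsq (∑ i, y i) = ∑ i, fsq (y i) := by
    ext j
    rw [Finsupp.finset_sum_apply]
    simp only [fsq_apply, Finsupp.finset_sum_apply]
    by_cases h : ∃ i0, y i0 j ≠ 0
    · obtain ⟨i0, hi0⟩ := h
      have hz : ∀ i, i ≠ i0 → y i j = 0 := by
        intro i hi
        by_contra hne
        exact (Finset.disjoint_left.mp (h2 i i0 hi)
          (Finsupp.mem_support_iff.mpr hne)) (Finsupp.mem_support_iff.mpr hi0)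
      rw [Finset.sum_eq_single i0 (fun b _ hb => hz b hb) (by simp),
        Finset.sum_eq_single i0 (fun b _ hb => by rw [hz b hb]; ring) (by simp)]
    · push_neg at h
      simp [h]
  have hA : Allowable 1 (fun i => fsq (y i)) := by
    refine ⟨fun i => ?_, fun i j hij => ?_, ?_⟩
    · simpa [support_fsq] using h1 i
    · simpa [support_fsq] using h2 i j hij
    · simpa [support_fsq] using h3
  have hlow := hasym n _ hA
  rw [← hsum] at hlow
  have hN0 : N 0 = 0 := by
    have := hhom 0 0
    simpa using this
  have hsub : N (∑ i, fsq (y i)) ≤ ∑ i, N (fsq (y i)) := by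
    classical
    induction (Finset.univ : Finset (Fin n)) using Finset.induction with
    | empty => simp [hN0]
    | insert a s hnot ih =>
      rw [Finset.sum_insert hnot, Finset.sum_insert hnot]
      exact (htri _ _).trans (add_le_add_right ih _)
  have hsq : ∀ i : Fin n, Real.sqrt (N (fsq (y i))) ^ 2 = N (fsq (y i)) :=
    fun i => Real.sq_sqrt (hnonneg _)
  have hsumeq : ∑ i, Real.sqrt (N (fsq (y i))) ^ 2 = ∑ i, N (fsq (y i)) :=
    Finset.sum_congr rfl fun i _ => hsq i
  constructor
  · rw [← Real.sqrt_mul hC.le, hsumeq]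
    exact Real.sqrt_le_sqrt hlow
  · rw [hsumeq, hsum]
    exact Real.sqrt_le_sqrt hsub
end

section
/- Each Schreier class S_n, viewed as a set of indicator sequences in {0,1}^ℕ, is closed in the product (pointwise) topology. -/
open Filter Topology

private lemma schreier_mem_foldr_union {L : List (Finset ℕ)} {a : ℕ} :
    a ∈ L.foldr (· ∪ ·) ∅ ↔ ∃ F ∈ L, a ∈ F := by
  induction L with
  | nil => simp
  | cons h t ih => simp [ih]

private lemma schreier_zero_eq {F : Finset ℕ} (h : Schreier 0 F) :
    ∀ a ∈ F, ∀ b ∈ F, a = b := by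
  cases h with
  | empty => simp
  | singleton m => simp

private lemma schreier_succ_elim {n : ℕ} {F : Finset ℕ} (h : Schreier (n + 1) F) :
    ∃ L : List (Finset ℕ), (∀ G ∈ L, Schreier n G) ∧
      L.Chain' (fun E F => ∀ a ∈ E, ∀ b ∈ F, a < b) ∧
      (∀ G ∈ L, ∀ a ∈ G, L.length ≤ a) ∧ F = L.foldr (· ∪ ·) ∅ := by
  cases h with
  | empty => exact ⟨[], by simp, List.isChain_nil, by simp, by simp⟩
  | union n L hmem hchain hlen => exact ⟨L, hmem, hchain, hlen, rfl⟩

private lemma schreier_ultra_coord {α β : Type*} [TopologicalSpace β] [DiscreteTopology β]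
    {u : Ultrafilter (α → β)} {f : α → β}
    (h : ↑u ≤ nhds f) (j : α) : {g : α → β | g j = f j} ∈ u := by
  have hT : Filter.Tendsto (fun g : α → β => g j) ↑u (nhds (f j)) :=
    ((continuous_apply j).tendsto f).mono_left h
  rw [nhds_discrete β, Filter.tendsto_pure] at hT
  exact hT

/-- Each Schreier class, viewed as a set of indicator sequences in
`{0,1}^ℕ` with the product topology, is closed. -/
theorem schreier_isClosed (n : ℕ) :
    IsClosed {f : ℕ → Bool | ∃ F : Finset ℕ, Schreier n F ∧
      ∀ j, f j = decide (j ∈ F)} := by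
  induction n with
  | zero =>
    refine isClosed_of_closure_subset fun f hf => ?_
    rw [mem_closure_iff_ultrafilter] at hf
    obtain ⟨u, hu, hconv⟩ := hf
    have hcoord : ∀ j : ℕ, {g : ℕ → Bool | g j = f j} ∈ u :=
      fun j => schreier_ultra_coord hconv j
    by_cases hz : ∀ j, f j = false
    · exact ⟨∅, Schreier.empty 0, fun j => by simp [hz j]⟩
    · push_neg at hz
      obtain ⟨m, hm⟩ := hz
      have hm' : f m = true := by simpa using hm
      refine ⟨{m}, Schreier.singleton m, fun j => ?_⟩
      rcases eq_or_ne j m with rfl | hj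
      · simpa using hm'
      · obtain ⟨g, ⟨⟨F, hF, hgF⟩, hgj⟩, hgm⟩ := Ultrafilter.nonempty_of_mem
          (inter_mem (inter_mem hu (hcoord j)) (hcoord m))
        have hmF : m ∈ F := by
          have : decide (m ∈ F) = true := by rw [← hgF, hgm, hm']
          simpa using this
        have hfj : f j = false := by
          cases hfj : f j with
          | false => rfl
          | true =>
            have hjF : j ∈ F := by
              have : decide (j ∈ F) = true := by rw [← hgF, hgj, hfj]
              simpa using this
            exact absurd (schreier_zero_eq hF j hjF m hmF) hj
        simp [hfj, hj]
  | succ n ih =>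
    refine isClosed_of_closure_subset fun f hf => ?_
    rw [mem_closure_iff_ultrafilter] at hf
    obtain ⟨u, hu, hconv⟩ := hf
    have hcoord : ∀ j : ℕ, {g : ℕ → Bool | g j = f j} ∈ u :=
      fun j => schreier_ultra_coord hconv j
    by_cases hz : ∀ j, f j = false
    · exact ⟨∅, Schreier.empty _, fun j => by simp [hz j]⟩
    push_neg at hz
    obtain ⟨m, hm⟩ := hz
    have hm' : f m = true := by simpa using hm
    set A : ℕ → Set (ℕ → Bool) := fun k =>
      {g | ∃ L : List (Finset ℕ), L.length = k ∧ (∀ G ∈ L, Schreier n G) ∧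
        L.Chain' (fun E F => ∀ a ∈ E, ∀ b ∈ F, a < b) ∧
        (∀ G ∈ L, ∀ a ∈ G, k ≤ a) ∧
        ∀ j, g j = decide (j ∈ L.foldr (· ∪ ·) ∅)} with hA
    have hsub : ({f : ℕ → Bool | ∃ F : Finset ℕ, Schreier (n + 1) F ∧
        ∀ j, f j = decide (j ∈ F)} ∩ {g : ℕ → Bool | g m = f m}) ⊆
        ⋃ k ∈ Set.Iic m, A k := by
      rintro g ⟨⟨F, hF, hgF⟩, hgm⟩
      obtain ⟨L, h1, h2, h3, rfl⟩ := schreier_succ_elim hF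
      have hmF : m ∈ L.foldr (· ∪ ·) ∅ := by
        have : decide (m ∈ L.foldr (· ∪ ·) ∅) = true := by rw [← hgF, hgm, hm']
        simpa using this
      obtain ⟨G, hGL, hmG⟩ := schreier_mem_foldr_union.mp hmF
      exact Set.mem_biUnion (h3 G hGL m hmG) ⟨L, rfl, h1, h2, h3, hgF⟩
    have hU : (⋃ k ∈ Set.Iic m, A k) ∈ u :=
      mem_of_superset (inter_mem hu (hcoord m)) hsub
    rw [Ultrafilter.finite_biUnion_mem_iff (Set.finite_Iic m)] at hU
    obtain ⟨k, -, hk⟩ := hU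
    have hchoice : ∀ g ∈ A k, ∃ L : List (Finset ℕ), L.length = k ∧
        (∀ G ∈ L, Schreier n G) ∧
        L.Chain' (fun E F => ∀ a ∈ E, ∀ b ∈ F, a < b) ∧
        (∀ G ∈ L, ∀ a ∈ G, k ≤ a) ∧
        ∀ j, g j = decide (j ∈ L.foldr (· ∪ ·) ∅) := fun g hg => hg
    choose! L hL1 hL2 hL3 hL4 hL5 using hchoice
    set Φ : (ℕ → Bool) → (Fin k → ℕ → Bool) :=
      fun g t j => decide (j ∈ (L g).getD t ∅) with hΦ
    obtain ⟨y, -, hy⟩ := isCompact_univ.ultrafilter_le_nhds (u.map Φ)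
      (le_principal_iff.mpr univ_mem)
    have hyt : Filter.Tendsto Φ ↑u (𝓝 y) := by
      rw [Filter.Tendsto, ← Ultrafilter.coe_map]; exact hy
    have hΦc : ∀ (t : Fin k) (j : ℕ), {g : ℕ → Bool | Φ g t j = y t j} ∈ u := by
      intro t j
      have hc : Continuous fun x : Fin k → ℕ → Bool => x t j :=
        (continuous_apply j).comp (continuous_apply t)
      have hT : Filter.Tendsto (fun g => Φ g t j) ↑u (𝓝 (y t j)) :=
        (hc.tendsto y).comp hyt
      rw [nhds_discrete Bool, Filter.tendsto_pure] at hT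
      exact hT
    have hyC : ∀ t : Fin k, ∃ G : Finset ℕ, Schreier n G ∧
        ∀ j, y t j = decide (j ∈ G) := by
      intro t
      have hcl : y t ∈ closure {f : ℕ → Bool | ∃ F : Finset ℕ, Schreier n F ∧
          ∀ j, f j = decide (j ∈ F)} := by
        rw [mem_closure_iff_ultrafilter]
        refine ⟨u.map (fun g => Φ g t), ?_, ?_⟩
        · apply Ultrafilter.mem_map.mpr
          refine mem_of_superset hk fun g hg => ?_
          have hlt : (t : ℕ) < (L g).length := by rw [hL1 g hg]; exact t.isLt
          refine ⟨(L g).getD t ∅, ?_, fun j => rfl⟩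
          rw [List.getD_eq_getElem _ _ hlt]
          exact hL2 g hg _ (List.getElem_mem hlt)
        · rw [Ultrafilter.coe_map]
          exact ((continuous_apply t).tendsto y).comp hyt
      exact ih.closure_subset hcl
    choose G hG1 hG2 using hyC
    have hiff : ∀ g ∈ A k, (∀ t : Fin k, Φ g t ((0:ℕ)) = y t 0) → True := fun _ _ _ => trivial
    refine ⟨(List.ofFn G).foldr (· ∪ ·) ∅, ?_, ?_⟩
    · refine Schreier.union n (List.ofFn G) ?_ ?_ ?_
      · intro F' hF'
        obtain ⟨t, rfl⟩ := Set.mem_range.mp ((List.mem_ofFn' G F').mp hF')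
        exact hG1 t
      · show List.IsChain _ (List.ofFn G); rw [List.isChain_iff_getElem]
        intro i hi
        rw [List.length_ofFn] at hi
        have hik : i < k := by omega
        have hik1 : i + 1 < k := by omega
        set t : Fin k := ⟨i, hik⟩
        set t' : Fin k := ⟨i + 1, hik1⟩
        rw [List.getElem_ofFn, List.getElem_ofFn]
        intro a ha b hb
        have hya : y t a = true := by
          rw [hG2 t a, decide_eq_true_eq]
          simpa using ha
        have hyb : y t' b = true := by
          rw [hG2 t' b, decide_eq_true_eq]
          simpa using hb
        obtain ⟨g, ⟨hg, hga⟩, hgb⟩ := Ultrafilter.nonempty_of_mem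
          (inter_mem (inter_mem hk (hΦc t a)) (hΦc t' b))
        have hlt : (i : ℕ) < (L g).length := by rw [hL1 g hg]; exact hik
        have hlt1 : i + 1 < (L g).length := by rw [hL1 g hg]; exact hik1
        have haL : a ∈ (L g).getD i ∅ := by
          have : Φ g t a = true := by rw [hga, hya]
          simpa [hΦ] using this
        have hbL : b ∈ (L g).getD (i + 1) ∅ := by
          have : Φ g t' b = true := by rw [hgb, hyb]
          simpa [hΦ] using this
        have hch := List.isChain_iff_getElem.mp (hL3 g hg) i (by omega)
        rw [List.getD_eq_getElem _ _ hlt] at haL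
        rw [List.getD_eq_getElem _ _ hlt1] at hbL
        exact hch a (by simpa using haL) b (by simpa using hbL)
      · intro F' hF' a ha
        obtain ⟨t, rfl⟩ := Set.mem_range.mp ((List.mem_ofFn' G F').mp hF')
        rw [List.length_ofFn]
        have hya : y t a = true := by
          rw [hG2 t a, decide_eq_true_eq]; exact ha
        obtain ⟨g, hg, hga⟩ := Ultrafilter.nonempty_of_mem
          (inter_mem hk (hΦc t a))
        have hlt : (t : ℕ) < (L g).length := by rw [hL1 g hg]; exact t.isLt
        have haL : a ∈ (L g).getD t ∅ := by
          have : Φ g t a = true := by rw [hga, hya]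
          simpa [hΦ] using this
        rw [List.getD_eq_getElem _ _ hlt] at haL
        exact hL4 g hg _ (List.getElem_mem hlt) a haL
    · intro j
      obtain ⟨g, ⟨hg, hgj⟩, hgy⟩ := Ultrafilter.nonempty_of_mem
        (inter_mem (inter_mem hk (hcoord j))
          (Filter.iInter_mem.mpr fun t : Fin k => hΦc t j))
      have hgy' : ∀ t : Fin k, Φ g t j = y t j := fun t => Set.mem_iInter.mp hgy t
      have hmemiff : ∀ t : Fin k, (j ∈ (L g).getD t ∅ ↔ j ∈ G t) := by
        intro t
        have h1 : decide (j ∈ (L g).getD t ∅) = decide (j ∈ G t) := by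
          rw [← hG2 t j]
          exact hgy' t
        exact decide_eq_decide.mp h1
      calc f j = g j := (hgj).symm
        _ = decide (j ∈ (L g).foldr (· ∪ ·) ∅) := hL5 g hg j
        _ = decide (j ∈ (List.ofFn G).foldr (· ∪ ·) ∅) := by
            rw [decide_eq_decide]
            constructor
            · intro hj
              obtain ⟨F', hF'L, hjF'⟩ := schreier_mem_foldr_union.mp hj
              obtain ⟨tt, hlt, hgetF⟩ := List.mem_iff_getElem.mp hF'L
              have htk : tt < k := by rw [← hL1 g hg]; exact hlt
              have hjG : j ∈ G ⟨tt, htk⟩ := by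
                refine (hmemiff ⟨tt, htk⟩).mp ?_
                rw [List.getD_eq_getElem _ _ hlt, hgetF]
                exact hjF'
              exact schreier_mem_foldr_union.mpr ⟨G ⟨tt, htk⟩,
                (List.mem_ofFn' G _).mpr ⟨⟨tt, htk⟩, rfl⟩, hjG⟩
            · intro hj
              obtain ⟨F', hF'L, hjF'⟩ := schreier_mem_foldr_union.mp hj
              obtain ⟨t, rfl⟩ := Set.mem_range.mp ((List.mem_ofFn' G F').mp hF'L)
              have hjL : j ∈ (L g).getD t ∅ := (hmemiff t).mpr hjF'
              have hlt : (t : ℕ) < (L g).length := by rw [hL1 g hg]; exact t.isLt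
              refine schreier_mem_foldr_union.mpr ⟨(L g).getD t ∅, ?_, hjL⟩
              rw [List.getD_eq_getElem _ _ hlt]
              exact List.getElem_mem hlt
end

section
/- Let (α_m) be positive reals with Σ_m α_m = 1 and α_{m+1}/α_m ≥ u > 0 for all m, let (θ_n) ⊂ (0,1), and let ‖·‖_{V,m} and ‖·‖_{V'} = Σ_m α_m ‖·‖_{V,m} be as defined. Then for every n ∈ ℕ and every family x_1, …, x_n ∈ c00 of pairwise disjointly supported vectors with n ≤ min supp x_i for all i, one has ‖Σ_{i=1}^n x_i‖_{V'} ≥ θ_1·u·Σ_{i=1}^n ‖x_i‖_{V'}. -/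
private lemma foldr_map_singleton (l : List ℕ) :
    (l.map (fun a => ({a} : Finset ℕ))).foldr (· ∪ ·) ∅ = l.toFinset := by
  induction l with
  | nil => simp
  | cons a l ih => simp [ih]

private lemma schreier_one_of_card_le (F : Finset ℕ) (h : ∀ a ∈ F, F.card ≤ a) :
    Schreier 1 F := by
  have key := Schreier.union 0 ((F.sort (· ≤ ·)).map (fun a => ({a} : Finset ℕ)))
    (fun G hG => by
      obtain ⟨a, -, rfl⟩ := List.mem_map.mp hG
      exact Schreier.singleton a)
    (by
      show List.IsChain _ _
      rw [List.isChain_map]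
      refine ((Finset.sortedLT_sort F).isChain).imp ?_
      intro a b hab x hx y hy
      rw [Finset.mem_singleton] at hx hy
      subst hx; subst hy; exact hab)
    (by
      intro G hG a haG
      obtain ⟨b, hb, rfl⟩ := List.mem_map.mp hG
      rw [Finset.mem_singleton] at haG
      subst haG
      rw [List.length_map, Finset.length_sort]
      exact h a ((Finset.mem_sort _).mp hb))
  rwa [foldr_map_singleton, Finset.sort_toFinset] at key

private def l1 (x : ℕ →₀ ℝ) : ℝ := ∑ j ∈ x.support, |x j|

private lemma l1_nonneg (x : ℕ →₀ ℝ) : 0 ≤ l1 x :=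
  Finset.sum_nonneg fun _ _ => abs_nonneg _

private lemma abs_apply_le_l1 (x : ℕ →₀ ℝ) (j : ℕ) : |x j| ≤ l1 x := by
  by_cases hj : j ∈ x.support
  · exact Finset.single_le_sum (f := fun j => |x j|) (fun i _ => abs_nonneg _) hj
  · rw [Finsupp.notMem_support_iff.mp hj]
    simpa using l1_nonneg x

private lemma ciSup_abs_nonneg (x : ℕ →₀ ℝ) : 0 ≤ ⨆ j, |x j| :=
  le_trans (abs_nonneg (x 0))
    (le_ciSup ⟨l1 x, by rintro _ ⟨j, rfl⟩; exact abs_apply_le_l1 x j⟩ 0)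

private lemma ciSup_abs_le_l1 (x : ℕ →₀ ℝ) : (⨆ j, |x j|) ≤ l1 x :=
  ciSup_le (abs_apply_le_l1 x)

private lemma sum_l1_filter_le {r : ℕ} (E : Fin r → Finset ℕ)
    (hd : ∀ i j, i ≠ j → Disjoint (E i) (E j)) (x : ℕ →₀ ℝ) :
    ∑ i, l1 (x.filter (· ∈ E i)) ≤ l1 x := by
  classical
  have h1 : ∀ i, l1 (x.filter (· ∈ E i)) = ∑ j ∈ x.support.filter (· ∈ E i), |x j| := by
    intro i
    unfold l1
    rw [Finsupp.support_filter]
    refine Finset.sum_congr rfl fun j hj => ?_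
    rw [Finsupp.filter_apply_pos]
    exact (Finset.mem_filter.mp hj).2
  simp only [h1]
  rw [← Finset.sum_biUnion]
  · exact Finset.sum_le_sum_of_subset_of_nonneg
      (fun j hj => (Finset.mem_filter.mp (Finset.mem_biUnion.mp hj).choose_spec.2).1)
      (fun j _ _ => abs_nonneg _)
  · intro i _ j _ hij
    refine Finset.disjoint_left.mpr fun a hai haj => ?_
    exact Finset.disjoint_left.mp (hd i j hij)
      (Finset.mem_filter.mp hai).2 (Finset.mem_filter.mp haj).2

private lemma N_bounds {θ : ℕ → ℝ} {N : ℕ → (ℕ →₀ ℝ) → ℝ}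
    (hθ : ∀ n, θ n ∈ Set.Ioo (0:ℝ) 1) (hrec : VNormRec θ N) :
    ∀ m x, 0 ≤ N m x ∧ N m x ≤ l1 x := by
  intro m
  induction m with
  | zero => intro x; rw [hrec.1 x]; exact ⟨ciSup_abs_nonneg x, ciSup_abs_le_l1 x⟩
  | succ m ih =>
    intro x
    have hlub := hrec.2 m x
    constructor
    · exact le_trans (ciSup_abs_nonneg x) (hlub.1 (Set.mem_union_left _ rfl))
    · refine hlub.2 ?_
      rintro y (hy | ⟨k, hk, r, E, hE, rfl⟩)
      · rw [Set.mem_singleton_iff] at hy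
        rw [hy]; exact ciSup_abs_le_l1 x
      · calc θ k * ∑ i, N m (x.filter (· ∈ E i))
            ≤ 1 * ∑ i, N m (x.filter (· ∈ E i)) :=
              mul_le_mul_of_nonneg_right (le_of_lt (hθ k).2)
                (Finset.sum_nonneg fun i _ => (ih _).1)
          _ ≤ l1 x := by
              rw [one_mul]
              exact le_trans (Finset.sum_le_sum fun i _ => (ih _).2)
                (sum_l1_filter_le E hE.2.1 x)

private lemma filter_sum_eq {n : ℕ} (x : Fin n → ℕ →₀ ℝ)
    (hdisj : ∀ i j, i ≠ j → Disjoint (x i).support (x j).support) (i : Fin n) :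
    (∑ j, x j).filter (· ∈ (x i).support) = x i := by
  classical
  ext a
  rw [Finsupp.filter_apply]
  split_ifs with h
  · rw [Finsupp.finset_sum_apply]
    refine Finset.sum_eq_single i (fun j _ hji => ?_) (by simp)
    by_contra hne
    exact Finset.disjoint_left.mp (hdisj j i hji) (Finsupp.mem_support_iff.mpr hne) h
  · exact (Finsupp.notMem_support_iff.mp h).symm

private lemma key_step {θ : ℕ → ℝ} {N : ℕ → (ℕ →₀ ℝ) → ℝ}
    (hrec : VNormRec θ N) {n : ℕ} (x : Fin n → ℕ →₀ ℝ)
    (hne : ∀ i, (x i).support.Nonempty)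
    (hdisj : ∀ i j, i ≠ j → Disjoint (x i).support (x j).support)
    (hmin : ∀ i, ∀ j ∈ (x i).support, n ≤ j) (m : ℕ) :
    θ 1 * ∑ i, N m (x i) ≤ N (m + 1) (∑ i, x i) := by
  have hA : AllowableSets 1 (fun i => (x i).support) := by
    refine ⟨hne, hdisj, schreier_one_of_card_le _ fun a ha => ?_⟩
    obtain ⟨i, -, rfl⟩ := Finset.mem_image.mp ha
    have hmem : ((x i).support.min.getD 0) ∈ (x i).support := by
      obtain ⟨b, hb⟩ := Finset.min_of_nonempty (hne i)
      rw [hb]; exact Finset.mem_of_min hb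
    calc (Finset.image (fun i => ((x i).support.min.getD 0)) Finset.univ).card
        ≤ (Finset.univ : Finset (Fin n)).card := Finset.card_image_le
      _ = n := by simp
      _ ≤ _ := hmin i _ hmem
  refine (hrec.2 m (∑ i, x i)).1 (Set.mem_union_right _ ?_)
  exact ⟨1, le_refl 1, n, fun i => (x i).support, hA, by
    congr 1
    refine Finset.sum_congr rfl fun i _ => ?_
    rw [filter_sum_eq x hdisj i]⟩


/-- `V'` is an asymptotic `ℓ₁` space for vectors with disjoint supports. -/
theorem VPrime_asymptotic_l1
    (θ : ℕ → ℝ) (hθ : ∀ n, θ n ∈ Set.Ioo (0:ℝ) 1)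
    (hθ0 : Filter.Tendsto θ Filter.atTop (nhds 0))
    (N : ℕ → (ℕ →₀ ℝ) → ℝ) (hrec : VNormRec θ N)
    (α : ℕ → ℝ) (hα : ∀ m, 0 < α m)
    (hsum : ∑' m : ℕ, α (m + 1) = 1)
    (u : ℝ) (hu : 0 < u)
    (hratio : ∀ m, 1 ≤ m → u * α m ≤ α (m + 1)) :
    ∀ (n : ℕ) (x : Fin n → (ℕ →₀ ℝ)),
      (∀ i, (x i).support.Nonempty) →
      (∀ i j, i ≠ j → Disjoint (x i).support (x j).support) →
      (∀ i, ∀ j ∈ (x i).support, n ≤ j) →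
      θ 1 * u * ∑ i, (∑' m : ℕ, α (m + 1) * N (m + 1) (x i)) ≤
        ∑' m : ℕ, α (m + 1) * N (m + 1) (∑ i, x i) := by
  intro n x hne hdisj hmin
  have hαs : Summable fun m => α (m + 1) := by
    by_contra hns
    rw [tsum_eq_zero_of_not_summable hns] at hsum
    norm_num at hsum
  have hNb := N_bounds hθ hrec
  -- summability of each α (m+1) * N (m+1) y
  have hsummN : ∀ y : ℕ →₀ ℝ, Summable fun m => α (m + 1) * N (m + 1) y := by
    intro y
    refine Summable.of_nonneg_of_le
      (fun m => mul_nonneg (hα _).le (hNb _ _).1)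
      (fun m => mul_le_mul_of_nonneg_left (hNb (m+1) y).2 (hα _).le)
      (hαs.mul_right (l1 y))
  have hθ1u : 0 ≤ θ 1 * u := mul_nonneg (hθ 1).1.le hu.le
  -- the comparison sequence
  set g : ℕ → ℝ := fun m => α (m + 1) * N (m + 1) (∑ i, x i) with hg
  have hgs : Summable g := hsummN _
  have hgnn : ∀ m, 0 ≤ g m := fun m => mul_nonneg (hα _).le (hNb _ _).1
  have hshift : Summable fun m => g (m + 1) := by
    exact (summable_nat_add_iff 1).mpr hgs
  have hsmall : Summable fun m => θ 1 * u * ∑ i, α (m + 1) * N (m + 1) (x i) := by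
    exact (summable_sum fun i _ => hsummN (x i)).mul_left _
  have hterm : ∀ m, θ 1 * u * ∑ i, α (m + 1) * N (m + 1) (x i) ≤ g (m + 1) := by
    intro m
    have h1 : θ 1 * ∑ i, N (m + 1) (x i) ≤ N (m + 2) (∑ i, x i) :=
      key_step hrec x hne hdisj hmin (m + 1)
    have h2 : u * α (m + 1) ≤ α (m + 2) := hratio (m + 1) (Nat.le_add_left 1 m)
    have hNsum : 0 ≤ ∑ i, N (m + 1) (x i) := Finset.sum_nonneg fun i _ => (hNb _ _).1
    have hθN : 0 ≤ θ 1 * ∑ i, N (m + 1) (x i) := mul_nonneg (hθ 1).1.le hNsum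
    calc θ 1 * u * ∑ i, α (m + 1) * N (m + 1) (x i)
        = (u * α (m + 1)) * (θ 1 * ∑ i, N (m + 1) (x i)) := by
          simp only [Finset.mul_sum]
          exact Finset.sum_congr rfl fun i _ => by ring
      _ ≤ α (m + 2) * (θ 1 * ∑ i, N (m + 1) (x i)) :=
          mul_le_mul_of_nonneg_right h2 hθN
      _ ≤ α (m + 2) * N (m + 2) (∑ i, x i) :=
          mul_le_mul_of_nonneg_left h1 (hα _).le
      _ = g (m + 1) := rfl
  calc θ 1 * u * ∑ i, (∑' m : ℕ, α (m + 1) * N (m + 1) (x i))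
      = ∑' m : ℕ, θ 1 * u * ∑ i, α (m + 1) * N (m + 1) (x i) := by
        rw [tsum_mul_left, Summable.tsum_finsetSum (fun i _ => hsummN (x i))]
    _ ≤ ∑' m : ℕ, g (m + 1) := Summable.tsum_le_tsum hterm hsmall hshift
    _ ≤ g 0 + ∑' m : ℕ, g (m + 1) := le_add_of_nonneg_left (hgnn 0)
    _ = ∑' m : ℕ, g m := (Summable.tsum_eq_zero_add hgs).symm
end

section
/- Let ‖·‖ be a norm on c00 with 1-unconditional basis (e_i), let (v_i) be a normalized block basis (disjoint, consecutively supported, ‖v_i‖ = 1) and suppose the norm has the form ‖x‖ = Σ_{m=1}^∞ α_m ‖x‖_m where each ‖·‖_m is a 1-unconditional norm majorized by ‖·‖ in the sense that the basis is 1-unconditional for each ‖·‖_m. Suppose there exist 1 = p_1 < p_2 < ⋯ such that Σ_{m=p_i}^{p_{i+1}-1} α_m ‖v_i‖_m ≥ 1/2 for all i. Then for all scalars (λ_i) ∈ c00, ‖Σ_i λ_i v_i‖ ≥ (1/2)·Σ_i |λ_i|; that is, (v_i) dominates the unit vector basis of ℓ1 with constant 1/2. -/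
theorem block_basis_dominates_l1
    (α : ℕ → ℝ) (hα : ∀ m, 0 < α m)
    (Nm : ℕ → (ℕ →₀ ℝ) → ℝ)
    (htri : ∀ m x y, Nm m (x + y) ≤ Nm m x + Nm m y)
    (hhom : ∀ (m : ℕ) (c : ℝ) (x), Nm m (c • x) = |c| * Nm m x)
    (hnonneg : ∀ m x, 0 ≤ Nm m x)
    (huncond : ∀ (m : ℕ) (x y : ℕ →₀ ℝ), (∀ j, |x j| ≤ |y j|) → Nm m x ≤ Nm m y)
    (Ntot : (ℕ →₀ ℝ) → ℝ)
    (hNtot : ∀ x, Ntot x = ∑' m : ℕ, α (m + 1) * Nm (m + 1) x)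
    (v : ℕ → (ℕ →₀ ℝ))
    (hblock : ∀ i j, i < j → ∀ a ∈ (v i).support, ∀ b ∈ (v j).support, a < b)
    (hdisj : ∀ i j, i ≠ j → Disjoint (v i).support (v j).support)
    (hnorm : ∀ i, Ntot (v i) = 1)
    (p : ℕ → ℕ) (hp0 : p 0 = 1) (hpmono : StrictMono p)
    (hhalf : ∀ i, (1:ℝ)/2 ≤ ∑ m ∈ Finset.Ico (p i) (p (i + 1)), α m * Nm m (v i)) :
    ∀ (n : ℕ) (lam : Fin n → ℝ),
      (1/2 : ℝ) * ∑ i, |lam i| ≤ Ntot (∑ i, lam i • v i) := by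
  intro n lam
  set x : ℕ →₀ ℝ := ∑ i, lam i • v i with hx
  have hp1 : ∀ i, 1 ≤ p i := fun i => hp0 ▸ hpmono.monotone (Nat.zero_le i)
  -- Nm m 0 = 0
  have hNm0 : ∀ m, Nm m 0 = 0 := by
    intro m
    have := hhom m 0 (0 : ℕ →₀ ℝ)
    simpa using this
  -- triangle inequality for finite sums
  have htri' : ∀ m (s : Finset (Fin n)) (f : Fin n → (ℕ →₀ ℝ)),
      Nm m (∑ i ∈ s, f i) ≤ ∑ i ∈ s, Nm m (f i) := by
    intro m s f
    induction s using Finset.induction with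
    | empty => simp [hNm0]
    | @insert a s h ih =>
      rw [Finset.sum_insert h, Finset.sum_insert h]
      exact (htri m _ _).trans (by linarith)
  -- summability for each v i
  have hsumv : ∀ i, Summable (fun m => α (m + 1) * Nm (m + 1) (v i)) := by
    intro i
    by_contra h
    have := tsum_eq_zero_of_not_summable h
    rw [← hNtot (v i), hnorm i] at this
    norm_num at this
  -- pointwise domination: |lam i * v i j| ≤ |x j|
  have hpt : ∀ (i : Fin n) (j : ℕ), |(lam i • v i) j| ≤ |x j| := by
    intro i j
    by_cases hj : v i j = 0
    · simp [Finsupp.smul_apply, hj]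
    · have hxj : x j = lam i * v i j := by
        rw [hx]
        rw [Finsupp.finset_sum_apply]
        rw [Finset.sum_eq_single i]
        · simp [Finsupp.smul_apply]
        · intro i' _ hne
          have hd := hdisj i' i (fun h => hne (Fin.ext h))
          have : (j : ℕ) ∉ (v i').support := by
            intro hmem
            exact (Finset.disjoint_left.mp hd hmem) (Finsupp.mem_support_iff.mpr hj)
          simp [Finsupp.notMem_support_iff.mp this]
        · intro h; exact absurd (Finset.mem_univ i) h
      rw [hxj]
      simp [Finsupp.smul_apply]
  -- Nm m (lam i • v i) ≤ Nm m x
  have hkey : ∀ m (i : Fin n), |lam i| * Nm m (v i) ≤ Nm m x := by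
    intro m i
    have := huncond m (lam i • v i) x (hpt i)
    rwa [hhom] at this
  -- summability of g
  set g : ℕ → ℝ := fun k => α (k + 1) * Nm (k + 1) x with hg
  have hgnonneg : ∀ k, 0 ≤ g k := fun k =>
    mul_nonneg (hα _).le (hnonneg _ _)
  have hgsum : Summable g := by
    have hbig : Summable (fun k => ∑ i, |lam i| * (α (k + 1) * Nm (k + 1) (v i))) :=
      summable_sum fun i _ => (hsumv i).mul_left _
    refine Summable.of_nonneg_of_le hgnonneg ?_ hbig
    · intro k
      have h1 : Nm (k + 1) x ≤ ∑ i, |lam i| * Nm (k + 1) (v i) := by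
        calc Nm (k + 1) x ≤ ∑ i, Nm (k + 1) (lam i • v i) := htri' _ _ _
          _ = ∑ i, |lam i| * Nm (k + 1) (v i) := by simp [hhom]
      calc g k = α (k + 1) * Nm (k + 1) x := rfl
        _ ≤ α (k + 1) * ∑ i, |lam i| * Nm (k + 1) (v i) :=
            mul_le_mul_of_nonneg_left h1 (hα _).le
        _ = ∑ i, |lam i| * (α (k + 1) * Nm (k + 1) (v i)) := by
            rw [Finset.mul_sum]; apply Finset.sum_congr rfl; intros; ring
  -- the blocks
  set F : Finset ℕ := Finset.univ.biUnion
    (fun i : Fin n => Finset.Ico (p i) (p (i + 1))) with hF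
  have hFge1 : ∀ m ∈ F, 1 ≤ m := by
    intro m hm
    rw [hF, Finset.mem_biUnion] at hm
    obtain ⟨i, _, hi⟩ := hm
    exact le_trans (hp1 i) (Finset.mem_Ico.mp hi).1
  have hblockdisj : ∀ i ∈ (Finset.univ : Finset (Fin n)), ∀ j ∈ Finset.univ, i ≠ j →
      Disjoint (Finset.Ico (p (i:ℕ)) (p ((i:ℕ) + 1))) (Finset.Ico (p (j:ℕ)) (p ((j:ℕ) + 1))) := by
    intro i _ j _ hij
    rw [Finset.disjoint_left]
    intro m hmi hmj
    rw [Finset.mem_Ico] at hmi hmj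
    rcases lt_or_gt_of_ne (fun h => hij (Fin.ext h)) with h | h
    · have : p ((i:ℕ) + 1) ≤ p (j:ℕ) := hpmono.monotone h
      omega
    · have : p ((j:ℕ) + 1) ≤ p (i:ℕ) := hpmono.monotone h
      omega
  -- sum over F
  have hsumF : ∑ i : Fin n, ∑ m ∈ Finset.Ico (p (i:ℕ)) (p ((i:ℕ) + 1)), α m * Nm m x
      = ∑ m ∈ F, α m * Nm m x := by
    rw [hF, Finset.sum_biUnion hblockdisj]
  -- per-block lower bound
  have hblocklb : ∀ i : Fin n, (1/2 : ℝ) * |lam i| ≤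
      ∑ m ∈ Finset.Ico (p i) (p ((i:ℕ) + 1)), α m * Nm m x := by
    intro i
    have h1 : (1/2 : ℝ) * |lam i| ≤
        |lam i| * ∑ m ∈ Finset.Ico (p i) (p ((i:ℕ) + 1)), α m * Nm m (v i) := by
      rw [mul_comm (1/2 : ℝ)]
      exact mul_le_mul_of_nonneg_left (hhalf i) (abs_nonneg _)
    refine h1.trans ?_
    rw [Finset.mul_sum]
    apply Finset.sum_le_sum
    intro m _
    calc |lam i| * (α m * Nm m (v i)) = α m * (|lam i| * Nm m (v i)) := by ring
      _ ≤ α m * Nm m x := mul_le_mul_of_nonneg_left (hkey m i) (hα m).le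
  -- F sum ≤ tsum g
  have hFle : ∑ m ∈ F, α m * Nm m x ≤ ∑' k, g k := by
    have hinj : ∀ a ∈ F, ∀ b ∈ F, a - 1 = b - 1 → a = b := by
      intro a ha b hb hab
      have h1 := hFge1 a ha; have h2 := hFge1 b hb; omega
    have himg : ∑ m ∈ F, α m * Nm m x = ∑ k ∈ F.image (· - 1), g k := by
      rw [Finset.sum_image hinj]
      apply Finset.sum_congr rfl
      intro m hm
      have h1 := hFge1 m hm
      have h2 : m - 1 + 1 = m := by omega
      simp [hg, h2]
    rw [himg]
    exact Summable.sum_le_tsum _ (fun k _ => hgnonneg k) hgsum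
  -- conclude
  rw [hNtot x]
  calc (1/2 : ℝ) * ∑ i, |lam i| = ∑ i : Fin n, (1/2 : ℝ) * |lam i| := Finset.mul_sum _ _ _
    _ ≤ ∑ i : Fin n, ∑ m ∈ Finset.Ico (p (i:ℕ)) (p ((i:ℕ) + 1)), α m * Nm m x :=
        Finset.sum_le_sum fun i _ => hblocklb i
    _ = ∑ m ∈ F, α m * Nm m x := hsumF
    _ ≤ ∑' k, g k := hFle
end
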